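/- For every real number m there exist constants C > 0 and R₀ ≥ 1 such that for all ρ ≥ R₀, |∫_ρ^{ρ+1} t^m e^{-t²/4} dt − (2/ρ) ρ^m e^{-ρ²/4}| ≤ C ρ^{-2} · ρ^m e^{-ρ²/4}. -/

import Mathlib

open Real MeasureTheory

lemma aux_exp_integral {c : ℝ} (hc : 0 < c) :
    ∫ s in (0:ℝ)..1, Real.exp (-(c * s)) = (1 - Real.exp (-c)) / c := by
  have h : ∀ s ∈ Set.uIcc (0:ℝ) 1,
      HasDerivAt (fun u : ℝ => -Real.exp (-(c * u)) / c) (Real.exp (-(c * s))) s := by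
    intro s _
    have h1 : HasDerivAt (fun u : ℝ => -(c * u)) (-c) s := by
      simpa using ((hasDerivAt_id s).const_mul c).fun_neg
    have h2 : HasDerivAt (fun u : ℝ => Real.exp (-(c * u)))
        (Real.exp (-(c * s)) * (-c)) s := (Real.hasDerivAt_exp _).comp s h1
    have h3 := (h2.fun_neg).div_const c
    have h4 : -(Real.exp (-(c * s)) * -c) / c = Real.exp (-(c * s)) := by field_simp
    rw [h4] at h3; exact h3
  have hcont : IntervalIntegrable (fun s => Real.exp (-(c * s))) volume 0 1 :=
    (Real.continuous_exp.comp (by fun_prop)).intervalIntegrable 0 1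
  rw [intervalIntegral.integral_eq_sub_of_hasDerivAt h hcont]
  field_simp
  simp
  ring

lemma aux_abs_exp_sub_one (y : ℝ) : |Real.exp y - 1| ≤ |y| * Real.exp |y| := by
  rcases le_or_gt 0 y with hy | hy
  · rw [abs_of_nonneg hy, abs_of_nonneg (by linarith [Real.one_le_exp hy] : (0:ℝ) ≤ Real.exp y - 1)]
    have h1 := mul_le_mul_of_nonneg_right (Real.add_one_le_exp (-y)) (Real.exp_pos y).le
    have h2 : Real.exp (-y) * Real.exp y = 1 := by
      rw [← Real.exp_add]; simp
    nlinarith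
  · have h1 : Real.exp y < 1 := Real.exp_lt_one_iff.mpr hy
    rw [abs_of_neg hy, abs_of_neg (by linarith : Real.exp y - 1 < 0)]
    have h2 := Real.add_one_le_exp y
    have h3 : (1:ℝ) ≤ Real.exp (-y) := Real.one_le_exp (by linarith)
    nlinarith

lemma aux_rpow_close (m x : ℝ) (hx : 0 ≤ x) (hx1 : x ≤ 1) :
    |(1 + x) ^ m - 1| ≤ |m| * Real.exp |m| * x := by
  have h1 : (0:ℝ) < 1 + x := by linarith
  rw [Real.rpow_def_of_pos h1 m, mul_comm (Real.log (1 + x)) m]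
  have hlog0 : 0 ≤ Real.log (1 + x) := Real.log_nonneg (by linarith)
  have hlogx : Real.log (1 + x) ≤ x := by
    have := Real.log_le_sub_one_of_pos h1; linarith
  calc |Real.exp (m * Real.log (1 + x)) - 1|
      ≤ |m * Real.log (1 + x)| * Real.exp |m * Real.log (1 + x)| := aux_abs_exp_sub_one _
    _ ≤ (|m| * x) * Real.exp |m| := by
        have h2 : |m * Real.log (1 + x)| ≤ |m| * x := by
          rw [abs_mul, abs_of_nonneg hlog0]
          exact mul_le_mul_of_nonneg_left hlogx (abs_nonneg m)
        have h3 : |m * Real.log (1 + x)| ≤ |m| := h2.trans (by nlinarith [abs_nonneg m])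
        exact mul_le_mul h2 (Real.exp_le_exp.2 h3) (Real.exp_pos _).le (by positivity)
    _ = |m| * Real.exp |m| * x := by ring

set_option maxHeartbeats 1600000 in
/-- `∫_ρ^{ρ+1} Φ_m = (2/ρ)Φ_m(ρ)(1 + O(ρ^{-2}))`. -/
theorem stmt_1 (m : ℝ) :
    ∃ C > (0 : ℝ), ∃ R₀ ≥ (1 : ℝ), ∀ ρ ≥ R₀,
      |(∫ t in ρ..(ρ + 1), t ^ m * Real.exp (-t ^ 2 / 4))
          - 2 / ρ * (ρ ^ m * Real.exp (-ρ ^ 2 / 4))|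
        ≤ C * ρ ^ (-2 : ℝ) * (ρ ^ m * Real.exp (-ρ ^ 2 / 4)) := by
  set A : ℝ := |m| * Real.exp |m| with hA
  have hA0 : 0 ≤ A := by positivity
  refine ⟨16 * A + 36, by positivity, 1, le_refl 1, fun ρ hρ => ?_⟩
  have hρ0 : (0:ℝ) < ρ := by linarith
  set Φ : ℝ := ρ ^ m * Real.exp (-ρ ^ 2 / 4) with hΦ
  have hΦ0 : 0 < Φ := by
    have := Real.rpow_pos_of_pos hρ0 m
    positivity
  -- change of variables
  have hI : (∫ t in ρ..(ρ + 1), t ^ m * Real.exp (-t ^ 2 / 4))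
      = ∫ s in (0:ℝ)..1, (s + ρ) ^ m * Real.exp (-(s + ρ) ^ 2 / 4) := by
    have h0 := intervalIntegral.integral_comp_add_right (a := (0:ℝ)) (b := 1)
      (fun t => t ^ m * Real.exp (-t ^ 2 / 4)) ρ
    rw [zero_add] at h0
    rw [add_comm ρ 1]
    exact h0.symm
  -- pointwise factorization for s ≥ 0
  have hfact : ∀ s : ℝ, 0 ≤ s →
      (s + ρ) ^ m * Real.exp (-(s + ρ) ^ 2 / 4)
        = Φ * ((1 + s / ρ) ^ m * Real.exp (-(ρ / 2 * s)) * Real.exp (-s ^ 2 / 4)) := by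
    intro s hs
    have h1 : s + ρ = ρ * (1 + s / ρ) := by field_simp; ring
    have h2 : (s + ρ) ^ m = ρ ^ m * (1 + s / ρ) ^ m := by
      rw [h1, Real.mul_rpow hρ0.le (by positivity)]
    have h3 : Real.exp (-(s + ρ) ^ 2 / 4)
        = Real.exp (-ρ ^ 2 / 4) * Real.exp (-(ρ / 2 * s)) * Real.exp (-s ^ 2 / 4) := by
      rw [← Real.exp_add, ← Real.exp_add]
      congr 1; ring
    rw [h2, h3, hΦ]; ring

  set K : ℝ := A + 1/4 with hK
  have hK0 : 0 ≤ K := by positivity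
  set h : ℝ → ℝ := fun s => (s + ρ) ^ m * Real.exp (-(s + ρ) ^ 2 / 4) with hh
  set e : ℝ → ℝ := fun s => Φ * Real.exp (-(ρ / 2 * s)) with he
  -- integral of e
  have hEint : (∫ s in (0:ℝ)..1, e s) = Φ * ((1 - Real.exp (-(ρ / 2))) / (ρ / 2)) := by
    rw [he]
    rw [intervalIntegral.integral_const_mul, aux_exp_integral (by positivity : (0:ℝ) < ρ / 2)]
  -- pointwise bound on Ioc 0 1
  have hptwise : ∀ s ∈ Set.Ioc (0:ℝ) 1,
      ‖h s - e s‖ ≤ Φ * K * (4 / ρ) * Real.exp (-(ρ / 4 * s)) := by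
    intro s hs
    obtain ⟨hs0, hs1⟩ := hs
    have hdiff : h s - e s
        = Φ * Real.exp (-(ρ / 2 * s)) * ((1 + s / ρ) ^ m * Real.exp (-s ^ 2 / 4) - 1) := by
      simp only [hh, he]
      rw [hfact s hs0.le]; ring
    have hD : |(1 + s / ρ) ^ m * Real.exp (-s ^ 2 / 4) - 1| ≤ K * s := by
      have e1 : Real.exp (-s ^ 2 / 4) ≤ 1 := Real.exp_le_one_iff.mpr (by nlinarith)
      have e2 : |Real.exp (-s ^ 2 / 4) - 1| ≤ s ^ 2 / 4 := by
        rw [abs_of_nonpos (by linarith)]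
        have := Real.add_one_le_exp (-s ^ 2 / 4)
        linarith
      have e3 : |(1 + s / ρ) ^ m - 1| ≤ A * (s / ρ) :=
        aux_rpow_close m (s / ρ) (by positivity) (by
          rw [div_le_one hρ0]; linarith)
      have e4 : s / ρ ≤ s := div_le_self hs0.le hρ
      have e5 : s ^ 2 ≤ s := by nlinarith
      calc |(1 + s / ρ) ^ m * Real.exp (-s ^ 2 / 4) - 1|
          = |((1 + s / ρ) ^ m - 1) * Real.exp (-s ^ 2 / 4) + (Real.exp (-s ^ 2 / 4) - 1)| := by
            ring_nf
        _ ≤ |((1 + s / ρ) ^ m - 1) * Real.exp (-s ^ 2 / 4)| + |Real.exp (-s ^ 2 / 4) - 1| :=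
            abs_add_le _ _
        _ ≤ A * (s / ρ) * 1 + s ^ 2 / 4 := by
            rw [abs_mul, abs_of_nonneg (Real.exp_pos _).le]
            have := mul_le_mul e3 e1 (Real.exp_pos _).le (by positivity)
            linarith
        _ ≤ K * s := by rw [hK]; nlinarith
    have hexp2 : Real.exp (-(ρ / 2 * s))
        = Real.exp (-(ρ / 4 * s)) * Real.exp (-(ρ / 4 * s)) := by
      rw [← Real.exp_add]; ring_nf
    have hse : s * Real.exp (-(ρ / 4 * s)) ≤ 4 / ρ := by
      have h1 := Real.add_one_le_exp (ρ / 4 * s)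
      have h2 : Real.exp (-(ρ / 4 * s)) * Real.exp (ρ / 4 * s) = 1 := by
        rw [← Real.exp_add]; simp
      have h3 : s ≤ 4 / ρ * Real.exp (ρ / 4 * s) := by
        rw [div_mul_eq_mul_div, le_div_iff₀ hρ0]
        nlinarith
      calc s * Real.exp (-(ρ / 4 * s))
          ≤ (4 / ρ * Real.exp (ρ / 4 * s)) * Real.exp (-(ρ / 4 * s)) :=
            mul_le_mul_of_nonneg_right h3 (Real.exp_pos _).le
        _ = 4 / ρ := by rw [mul_assoc, mul_comm (Real.exp _), h2, mul_one]
    rw [hdiff, Real.norm_eq_abs, abs_mul,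
      abs_of_nonneg (by positivity : (0:ℝ) ≤ Φ * Real.exp (-(ρ / 2 * s)))]
    calc Φ * Real.exp (-(ρ / 2 * s)) * |(1 + s / ρ) ^ m * Real.exp (-s ^ 2 / 4) - 1|
        ≤ Φ * Real.exp (-(ρ / 2 * s)) * (K * s) :=
          mul_le_mul_of_nonneg_left hD (by positivity)
      _ = Φ * K * (s * Real.exp (-(ρ / 4 * s))) * Real.exp (-(ρ / 4 * s)) := by
          rw [hexp2]; ring
      _ ≤ Φ * K * (4 / ρ) * Real.exp (-(ρ / 4 * s)) := by
          have := mul_le_mul_of_nonneg_left hse (by positivity : (0:ℝ) ≤ Φ * K)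
          exact mul_le_mul_of_nonneg_right (by nlinarith) (Real.exp_pos _).le
  -- integrability
  have hcontρ : ∀ s ∈ Set.uIcc (0:ℝ) 1, s + ρ ≠ 0 := by
    intro s hs
    rw [Set.uIcc_of_le (by norm_num : (0:ℝ) ≤ 1)] at hs
    have : 0 ≤ s := hs.1
    positivity
  have hhint : IntervalIntegrable h volume 0 1 := by
    rw [hh]
    apply ContinuousOn.intervalIntegrable
    apply ContinuousOn.mul
    · exact ContinuousOn.rpow_const (by fun_prop) (fun s hs => Or.inl (hcontρ s hs))
    · exact (Real.continuous_exp.comp (by fun_prop)).continuousOn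
  have heint : IntervalIntegrable e volume 0 1 := by
    rw [he]
    exact ((continuous_const.mul (Real.continuous_exp.comp (by fun_prop))).intervalIntegrable 0 1)
  have hbint : IntervalIntegrable (fun s => Φ * K * (4 / ρ) * Real.exp (-(ρ / 4 * s))) volume 0 1 :=
    ((continuous_const.mul (Real.continuous_exp.comp (by fun_prop))).intervalIntegrable 0 1)
  -- main estimate on ∫ (h - e)
  have hmain : |(∫ s in (0:ℝ)..1, h s) - ∫ s in (0:ℝ)..1, e s| ≤ 16 * K * Φ / ρ ^ 2 := by
    rw [← intervalIntegral.integral_sub hhint heint]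
    have := intervalIntegral.norm_integral_le_abs_of_norm_le
      (f := fun s => h s - e s) (g := fun s => Φ * K * (4 / ρ) * Real.exp (-(ρ / 4 * s)))
      (μ := volume) (a := 0) (b := 1)
      (by
        rw [ae_restrict_iff' measurableSet_uIoc]
        filter_upwards with s hs
        rw [Set.uIoc_of_le (by norm_num : (0:ℝ) ≤ 1)] at hs
        exact hptwise s hs) hbint
    rw [Real.norm_eq_abs] at this
    refine this.trans ?_
    have hbval : (∫ s in (0:ℝ)..1, Φ * K * (4 / ρ) * Real.exp (-(ρ / 4 * s)))
        = Φ * K * (4 / ρ) * ((1 - Real.exp (-(ρ / 4))) / (ρ / 4)) := by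
      rw [intervalIntegral.integral_const_mul, aux_exp_integral (by positivity : (0:ℝ) < ρ / 4)]
    rw [hbval]
    have hle1 : (1 - Real.exp (-(ρ / 4))) / (ρ / 4) ≤ 4 / ρ := by
      rw [div_le_div_iff₀ (by positivity) hρ0]
      have := (Real.exp_pos (-(ρ / 4))).le
      nlinarith
    have hnn1 : Real.exp (-(ρ / 4)) ≤ 1 := Real.exp_le_one_iff.mpr (by linarith)
    have hnn2 : (0:ℝ) ≤ (1 - Real.exp (-(ρ / 4))) / (ρ / 4) :=
      div_nonneg (by linarith) (by positivity)
    rw [abs_of_nonneg (mul_nonneg (by positivity) hnn2)]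
    calc Φ * K * (4 / ρ) * ((1 - Real.exp (-(ρ / 4))) / (ρ / 4))
        ≤ Φ * K * (4 / ρ) * (4 / ρ) := mul_le_mul_of_nonneg_left hle1 (by positivity)
      _ = 16 * K * Φ / ρ ^ 2 := by field_simp; ring
  -- tail estimate
  have hexp16 : Real.exp (-(ρ / 2)) ≤ 16 / ρ ^ 2 := by
    have h1 := Real.add_one_le_exp (ρ / 4)
    have hrexp : ρ ^ 2 ≤ 16 * Real.exp (ρ / 2) := by
      rw [show ρ / 2 = ρ / 4 + ρ / 4 by ring, Real.exp_add]
      nlinarith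
    have h2 : Real.exp (-(ρ / 2)) * Real.exp (ρ / 2) = 1 := by
      rw [← Real.exp_add]; simp
    rw [le_div_iff₀ (by positivity)]
    nlinarith [(Real.exp_pos (-(ρ / 2))).le]
  have htail : |(∫ s in (0:ℝ)..1, e s) - 2 / ρ * Φ| ≤ 32 * Φ / ρ ^ 2 := by
    rw [hEint]
    have heq : Φ * ((1 - Real.exp (-(ρ / 2))) / (ρ / 2)) - 2 / ρ * Φ
        = -(2 / ρ * Φ * Real.exp (-(ρ / 2))) := by
      field_simp; ring
    rw [heq, abs_neg, abs_of_nonneg (by positivity : (0:ℝ) ≤ 2 / ρ * Φ * Real.exp (-(ρ / 2)))]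
    calc 2 / ρ * Φ * Real.exp (-(ρ / 2)) ≤ 2 / ρ * Φ * (16 / ρ ^ 2) :=
          mul_le_mul_of_nonneg_left hexp16 (by positivity)
      _ ≤ 32 * Φ / ρ ^ 2 := by
          have h2ρ : 2 / ρ ≤ 2 := by rw [div_le_iff₀ hρ0]; linarith
          have hstep : 2 / ρ * Φ * (16 / ρ ^ 2) ≤ 2 * Φ * (16 / ρ ^ 2) :=
            mul_le_mul_of_nonneg_right (mul_le_mul_of_nonneg_right h2ρ hΦ0.le)
              (by positivity)
          rw [show 32 * Φ / ρ ^ 2 = 2 * Φ * (16 / ρ ^ 2) by ring]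
          exact hstep
  -- conclude
  have hpow : ρ ^ (-2:ℝ) = (ρ ^ 2)⁻¹ := by
    rw [Real.rpow_neg hρ0.le, show ((2:ℝ)) = ((2:ℕ):ℝ) by norm_num, Real.rpow_natCast]
  rw [hI, hpow]
  calc |(∫ s in (0:ℝ)..1, h s) - 2 / ρ * Φ|
      ≤ |(∫ s in (0:ℝ)..1, h s) - ∫ s in (0:ℝ)..1, e s|
        + |(∫ s in (0:ℝ)..1, e s) - 2 / ρ * Φ| := abs_sub_le _ _ _
    _ ≤ 16 * K * Φ / ρ ^ 2 + 32 * Φ / ρ ^ 2 := add_le_add hmain htail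
    _ = (16 * A + 36) * (ρ ^ 2)⁻¹ * Φ := by
        rw [hK]
        have hρne : ρ ≠ 0 := hρ0.ne'
        field_simp
        ring
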